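/- arXiv:1506.00940 — 3 statements merged into one kernel-verified Lean document; each statement's English description precedes it below -/
import Mathlib

section
/- For d ≥ 3 and ν > d, and for |x| > 2, the integral I₄ := ∫_{ℝ^d \ B_{2|x|}} |z|^{(1−d)/2} ⟨x − z⟩^{−ν} dz is bounded by C |x|^{(1−d)/2} for a constant C depending only on d and ν. -/
open MeasureTheory

theorem integral_I4_bound
    (d : ℕ) (hd : 3 ≤ d) (ν : ℝ) (hν : (d : ℝ) < ν) :
    ∃ C > 0, ∀ x : EuclideanSpace ℝ (Fin d), 2 < ‖x‖ →
      (∫ z in (Metric.ball (0 : EuclideanSpace ℝ (Fin d)) (2 * ‖x‖))ᶜ,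
          ‖z‖ ^ ((1 - (d : ℝ)) / 2) * ((1 + ‖x - z‖ ^ 2) ^ ((1 : ℝ) / 2)) ^ (-ν))
        ≤ C * ‖x‖ ^ ((1 - (d : ℝ)) / 2) := by
  set E := EuclideanSpace ℝ (Fin d)
  set g : E → ℝ := fun w => ((1 + ‖w‖ ^ 2) ^ ((1 : ℝ) / 2)) ^ (-ν) with hg
  have hgnn : ∀ w : E, 0 ≤ g w := fun w => by positivity
  have hgeq : ∀ w : E, g w = ((1 : ℝ) + ‖w‖ ^ 2) ^ (-ν / 2) := by
    intro w
    simp only [hg]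
    rw [← Real.rpow_mul (by positivity : (0:ℝ) ≤ 1 + ‖w‖ ^ 2)]
    congr 1
    ring
  have hgInt : Integrable g (volume : Measure E) := by
    have := integrable_rpow_neg_one_add_norm_sq
      (E := E) (μ := volume) (r := ν)
      (by rw [show Module.finrank ℝ E = d from finrank_euclideanSpace_fin]; exact hν)
    exact this.congr (Filter.Eventually.of_forall fun w => (hgeq w).symm)
  set C := ∫ w : E, g w with hC
  have hCpos : 0 < C := by
    rw [hC, integral_pos_iff_support_of_nonneg hgnn hgInt]
    have : Function.support g = Set.univ := by
      ext w; simp only [Function.mem_support, Set.mem_univ, iff_true]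
      exact ne_of_gt (by positivity)
    rw [this]
    exact (MeasureTheory.Measure.measure_univ_pos (μ := (volume : Measure E))).mpr
      (NeZero.ne _)
  refine ⟨C, hCpos, fun x hx => ?_⟩
  set a : ℝ := (1 - (d : ℝ)) / 2 with ha
  have hxpos : (0 : ℝ) < ‖x‖ := by linarith
  have hale : a ≤ 0 := by
    have : (3 : ℝ) ≤ (d : ℝ) := by exact_mod_cast hd
    rw [ha]; nlinarith
  set s := (Metric.ball (0 : E) (2 * ‖x‖))ᶜ with hs
  have hsmeas : MeasurableSet s := Metric.isOpen_ball.measurableSet.compl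
  set h : E → ℝ := fun z => ‖x‖ ^ a * g (x - z) with hh
  have hbound : ∀ z ∈ s, ‖z‖ ^ a * g (x - z) ≤ h z := by
    intro z hz
    have hz' : 2 * ‖x‖ ≤ ‖z‖ := by
      simpa [hs, Metric.mem_ball, dist_zero_right] using hz
    have h1 : ‖x‖ ≤ ‖z‖ := by linarith
    have h2 : ‖z‖ ^ a ≤ ‖x‖ ^ a := Real.rpow_le_rpow_of_nonpos hxpos h1 hale
    exact mul_le_mul_of_nonneg_right h2 (hgnn _)
  have hhInt : Integrable h (volume : Measure E) :=
    (hgInt.comp_sub_left x).const_mul _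
  have hfmeas : AEStronglyMeasurable
      (fun z : E => ‖z‖ ^ a * g (x - z)) (volume.restrict s) := by
    apply Measurable.aestronglyMeasurable
    fun_prop
  have hfInt : IntegrableOn (fun z : E => ‖z‖ ^ a * g (x - z)) s := by
    refine (hhInt.integrableOn).mono' hfmeas ?_
    filter_upwards [ae_restrict_mem hsmeas] with z hz
    rw [Real.norm_of_nonneg (by positivity)]
    exact hbound z hz
  calc (∫ z in s, ‖z‖ ^ a * g (x - z))
      ≤ ∫ z in s, h z :=
        setIntegral_mono_on hfInt hhInt.integrableOn hsmeas hbound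
    _ ≤ ∫ z, h z :=
        setIntegral_le_integral hhInt
          (Filter.Eventually.of_forall fun z => by positivity)
    _ = ‖x‖ ^ a * ∫ z, g (x - z) := by rw [hh]; exact MeasureTheory.integral_const_mul _ _
    _ = ‖x‖ ^ a * C := by rw [integral_sub_left_eq_self g volume x]
    _ = C * ‖x‖ ^ a := mul_comm _ _
end

section
/- Suppose K : ℝ^d → ℝ satisfies |K(x)| ≤ C|x|^{2−d} for |x| < 1 and |K(x)| ≤ C|x|^{(1−d)/2} for |x| ≥ 1, with d ≥ 3. Then for any ν > d and any continuous v with ‖v‖_ν := sup_x ⟨x⟩^ν |v(x)| < ∞, the convolution K ∗ v(x) := ∫ K(z) v(x−z) dz is defined by an absolutely convergent integral for every x ∈ ℝ^d, and there is a constant C' (depending only on d, ν, C) such that sup_x ⟨x⟩^{(d−1)/2} |K ∗ v(x)| ≤ C' ‖v‖_ν. -/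
open MeasureTheory Real Set Metric

lemma aux_integrableOn_rpow_ball (d : ℕ) {s : ℝ} (hs : -(d:ℝ) < s) (hs0 : s < 0) :
    IntegrableOn (fun w : EuclideanSpace ℝ (Fin d) => ‖w‖ ^ s)
      (Metric.ball 0 1) := by
  have hmeas : Measurable fun w : EuclideanSpace ℝ (Fin d) => ‖w‖ ^ s :=
    by fun_prop
  have hnn : ∀ w : EuclideanSpace ℝ (Fin d), 0 ≤ ‖w‖ ^ s :=
    fun w => rpow_nonneg (norm_nonneg _) _
  refine ⟨hmeas.aestronglyMeasurable, ?_⟩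
  rw [hasFiniteIntegral_iff_ofReal (ae_of_all _ hnn)]
  set μ := volume.restrict (Metric.ball (0 : EuclideanSpace ℝ (Fin d)) 1) with hμ
  rw [lintegral_eq_lintegral_meas_le μ (ae_of_all _ hnn) hmeas.aemeasurable]
  have hglob : ∀ t : ℝ, μ {a | t ≤ ‖a‖ ^ s} ≤ volume (Metric.ball (0 : EuclideanSpace ℝ (Fin d)) 1) := by
    intro t
    calc μ {a | t ≤ ‖a‖ ^ s} ≤ μ univ := measure_mono (subset_univ _)
    _ = volume (Metric.ball (0 : EuclideanSpace ℝ (Fin d)) 1) := by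
        rw [hμ, Measure.restrict_apply_univ]
  have hq : s⁻¹ * (d:ℝ) < -1 := by
    have h1 : -s < (d:ℝ) := by linarith
    have h2 : s⁻¹ < 0 := inv_neg''.2 hs0
    have h3 := mul_lt_mul_of_neg_left h1 h2
    have h4 : s⁻¹ * s = 1 := inv_mul_cancel₀ hs0.ne
    nlinarith [h3, h4]
  have hIoi : ∀ t ∈ Ioi (1:ℝ), μ {a | t ≤ ‖a‖ ^ s} ≤
      ENNReal.ofReal (t ^ (s⁻¹ * (d:ℝ))) * volume (Metric.ball (0 : EuclideanSpace ℝ (Fin d)) 1) := by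
    intro t ht
    have ht0 : (0:ℝ) < t := lt_trans one_pos ht
    have hsub : {a : EuclideanSpace ℝ (Fin d) | t ≤ ‖a‖ ^ s} ⊆
        Metric.closedBall 0 (t ^ s⁻¹) := by
      intro a ha
      simp only [mem_setOf_eq] at ha
      rcases eq_or_ne a 0 with rfl | h0
      · rw [norm_zero, Real.zero_rpow hs0.ne] at ha; linarith
      · have := Real.rpow_le_rpow_of_nonpos ht0 ha (inv_nonpos.2 hs0.le)
        rw [← Real.rpow_mul (norm_nonneg a), mul_inv_cancel₀ hs0.ne, Real.rpow_one] at this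
        exact mem_closedBall_zero_iff.2 this
    calc μ {a | t ≤ ‖a‖ ^ s}
        ≤ volume {a : EuclideanSpace ℝ (Fin d) | t ≤ ‖a‖ ^ s} := Measure.restrict_le_self _
      _ ≤ volume (Metric.closedBall (0 : EuclideanSpace ℝ (Fin d)) (t ^ s⁻¹)) :=
          measure_mono hsub
      _ = ENNReal.ofReal ((t ^ s⁻¹) ^ Module.finrank ℝ (EuclideanSpace ℝ (Fin d))) *
            volume (Metric.ball (0 : EuclideanSpace ℝ (Fin d)) 1) :=
          Measure.addHaar_closedBall _ _ (rpow_nonneg ht0.le _)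
      _ = ENNReal.ofReal (t ^ (s⁻¹ * (d:ℝ))) * volume (Metric.ball (0 : EuclideanSpace ℝ (Fin d)) 1) := by
          rw [finrank_euclideanSpace_fin, ← Real.rpow_natCast (t ^ s⁻¹) d,
            ← Real.rpow_mul ht0.le]
  calc ∫⁻ t in Ioi (0:ℝ), μ {a | t ≤ ‖a‖ ^ s}
      = ∫⁻ t in Ioc (0:ℝ) 1 ∪ Ioi 1, μ {a | t ≤ ‖a‖ ^ s} := by
        rw [Ioc_union_Ioi_eq_Ioi zero_le_one]
    _ ≤ (∫⁻ t in Ioc (0:ℝ) 1, μ {a | t ≤ ‖a‖ ^ s}) + ∫⁻ t in Ioi (1:ℝ), μ {a | t ≤ ‖a‖ ^ s} :=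
        lintegral_union_le _ _ _
    _ < ⊤ := by
        refine ENNReal.add_lt_top.2 ⟨?_, ?_⟩
        · calc (∫⁻ t in Ioc (0:ℝ) 1, μ {a | t ≤ ‖a‖ ^ s})
              ≤ ∫⁻ _ in Ioc (0:ℝ) 1, volume (Metric.ball (0 : EuclideanSpace ℝ (Fin d)) 1) :=
              lintegral_mono fun t => hglob t
            _ = volume (Metric.ball (0 : EuclideanSpace ℝ (Fin d)) 1) * volume (Ioc (0:ℝ) 1) := by
              rw [setLIntegral_const]
            _ < ⊤ := by
              refine ENNReal.mul_lt_top measure_ball_lt_top ?_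
              simp [Real.volume_Ioc]
        · have hint := (integrableOn_Ioi_rpow_of_lt hq one_pos).hasFiniteIntegral
          rw [hasFiniteIntegral_iff_ofReal] at hint
          · calc (∫⁻ t in Ioi (1:ℝ), μ {a | t ≤ ‖a‖ ^ s})
                ≤ ∫⁻ t in Ioi (1:ℝ), ENNReal.ofReal (t ^ (s⁻¹ * (d:ℝ))) *
                    volume (Metric.ball (0 : EuclideanSpace ℝ (Fin d)) 1) :=
                  setLIntegral_mono' measurableSet_Ioi hIoi
              _ = (∫⁻ t in Ioi (1:ℝ), ENNReal.ofReal (t ^ (s⁻¹ * (d:ℝ)))) *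
                    volume (Metric.ball (0 : EuclideanSpace ℝ (Fin d)) 1) :=
                  lintegral_mul_const' _ _ measure_ball_lt_top.ne
              _ < ⊤ := ENNReal.mul_lt_top hint measure_ball_lt_top
          · filter_upwards [ae_restrict_mem measurableSet_Ioi] with t ht
            exact rpow_nonneg (le_trans zero_le_one ht.le) _

lemma aux_scale (d : ℕ) {s : ℝ} (hs : -(d:ℝ) < s) (hs0 : s < 0) {c : ℝ} (hc : 0 < c) :
    IntegrableOn (fun w : EuclideanSpace ℝ (Fin d) => ‖w‖ ^ s) (Metric.ball 0 c) ∧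
    ∫ z in Metric.ball (0 : EuclideanSpace ℝ (Fin d)) c, ‖z‖ ^ s =
      c ^ ((d:ℝ) + s) * ∫ z in Metric.ball (0 : EuclideanSpace ℝ (Fin d)) 1, ‖z‖ ^ s := by
  set f : EuclideanSpace ℝ (Fin d) → ℝ :=
    (Metric.ball (0 : EuclideanSpace ℝ (Fin d)) 1).indicator (fun w => ‖w‖ ^ s) with hf
  have hfint : Integrable f :=
    (integrable_indicator_iff measurableSet_ball).2 (aux_integrableOn_rpow_ball d hs hs0)
  have key : ∀ z : EuclideanSpace ℝ (Fin d),
      (Metric.ball (0 : EuclideanSpace ℝ (Fin d)) c).indicator (fun w => ‖w‖ ^ s) z =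
        c ^ s * f (c⁻¹ • z) := by
    intro z
    have hnorm : ‖c⁻¹ • z‖ = c⁻¹ * ‖z‖ := by
      rw [norm_smul, Real.norm_eq_abs, abs_of_pos (inv_pos.2 hc)]
    have hmem : c⁻¹ • z ∈ Metric.ball (0 : EuclideanSpace ℝ (Fin d)) 1 ↔
        z ∈ Metric.ball (0 : EuclideanSpace ℝ (Fin d)) c := by
      rw [mem_ball_zero_iff, mem_ball_zero_iff, hnorm, inv_mul_lt_iff₀ hc, mul_one]
    by_cases hz : z ∈ Metric.ball (0 : EuclideanSpace ℝ (Fin d)) c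
    · rw [indicator_of_mem hz, hf, indicator_of_mem (hmem.2 hz), hnorm,
        Real.mul_rpow (inv_nonneg.2 hc.le) (norm_nonneg _), Real.inv_rpow hc.le,
        ← mul_assoc, mul_inv_cancel₀ (Real.rpow_pos_of_pos hc s).ne', one_mul]
    · rw [indicator_of_notMem hz, hf, indicator_of_notMem (fun h => hz (hmem.1 h)), mul_zero]
  have hcomp : Integrable (fun z : EuclideanSpace ℝ (Fin d) => c ^ s * f (c⁻¹ • z)) := by
    exact ((integrable_comp_smul_iff volume f (inv_ne_zero hc.ne')).2 hfint).const_mul _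
  constructor
  · exact (integrable_indicator_iff measurableSet_ball).1
      (hcomp.congr (ae_of_all _ fun z => (key z).symm))
  · have hpow : |((c⁻¹ ^ Module.finrank ℝ (EuclideanSpace ℝ (Fin d)))⁻¹ : ℝ)| = c ^ (d:ℝ) := by
      rw [finrank_euclideanSpace_fin, ← inv_pow, inv_inv, abs_of_pos (pow_pos hc d),
        ← Real.rpow_natCast]
    rw [← integral_indicator measurableSet_ball]
    calc ∫ z, (Metric.ball (0 : EuclideanSpace ℝ (Fin d)) c).indicator (fun w => ‖w‖ ^ s) z
        = ∫ z, c ^ s * f (c⁻¹ • z) := by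
          exact integral_congr_ae (ae_of_all _ key)
      _ = c ^ s * ∫ z, f (c⁻¹ • z) := integral_const_mul _ _
      _ = c ^ s * (c ^ (d:ℝ) * ∫ z, f z) := by
          rw [Measure.integral_comp_smul volume f c⁻¹, hpow, smul_eq_mul]
      _ = c ^ ((d:ℝ) + s) * ∫ z in Metric.ball (0 : EuclideanSpace ℝ (Fin d)) 1, ‖z‖ ^ s := by
          rw [hf, integral_indicator measurableSet_ball, ← mul_assoc,
            ← Real.rpow_add hc, add_comm]

noncomputable def wnorm {d : ℕ} (ν : ℝ) (f : EuclideanSpace ℝ (Fin d) → ℝ) : ℝ :=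
  ⨆ x : EuclideanSpace ℝ (Fin d), ((1 + ‖x‖ ^ 2) ^ ((1 : ℝ) / 2)) ^ ν * |f x|

set_option maxHeartbeats 2000000 in
theorem convolution_weighted_bound
    (d : ℕ) (hd : 3 ≤ d) (ν C : ℝ) (hν : (d : ℝ) < ν) (hC : 0 < C)
    (K : EuclideanSpace ℝ (Fin d) → ℝ) (hKmeas : Measurable K)
    (hK1 : ∀ x : EuclideanSpace ℝ (Fin d), ‖x‖ < 1 → |K x| ≤ C * ‖x‖ ^ ((2 : ℝ) - d))
    (hK2 : ∀ x : EuclideanSpace ℝ (Fin d), 1 ≤ ‖x‖ → |K x| ≤ C * ‖x‖ ^ ((1 - (d : ℝ)) / 2))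
    (v : EuclideanSpace ℝ (Fin d) → ℝ) (hv : Continuous v)
    (hvb : BddAbove (Set.range fun x => ((1 + ‖x‖ ^ 2) ^ ((1 : ℝ) / 2)) ^ ν * |v x|)) :
    (∀ x : EuclideanSpace ℝ (Fin d), Integrable (fun z => K z * v (x - z))) ∧
    ∃ C' > 0, ∀ x : EuclideanSpace ℝ (Fin d),
      ((1 + ‖x‖ ^ 2) ^ ((1 : ℝ) / 2)) ^ (((d : ℝ) - 1) / 2) *
          |∫ z, K z * v (x - z)| ≤ C' * wnorm ν v := by
  have hd3 : (3:ℝ) ≤ (d:ℝ) := by exact_mod_cast hd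
  have hν0 : 0 < ν := by linarith
  have hs1a : -(d:ℝ) < 2 - d := by linarith
  have hs1b : (2:ℝ) - d < 0 := by linarith
  have hs2a : -(d:ℝ) < (1 - (d:ℝ))/2 := by linarith
  have hs2b : (1 - (d:ℝ))/2 < 0 := by linarith
  set M := wnorm ν v with hMdef
  have hvM : ∀ y : EuclideanSpace ℝ (Fin d),
      ((1 + ‖y‖ ^ 2) ^ ((1:ℝ)/2)) ^ ν * |v y| ≤ M := fun y => le_ciSup hvb y
  have hM0 : 0 ≤ M := le_trans (by positivity) (hvM 0)
  set g : EuclideanSpace ℝ (Fin d) → ℝ := fun y => (1 + ‖y‖ ^ 2) ^ (-ν / 2) with hgdef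
  have hg_pos : ∀ y, 0 < g y := fun y => Real.rpow_pos_of_pos (by positivity) _
  have hvle : ∀ y, |v y| ≤ M * g y := by
    intro y
    have hb : (0:ℝ) < 1 + ‖y‖ ^ 2 := by positivity
    have h := hvM y
    rw [← Real.rpow_mul hb.le] at h
    have hp := Real.rpow_pos_of_pos hb ((1:ℝ)/2 * ν)
    have hgy : g y = ((1 + ‖y‖ ^ 2) ^ ((1:ℝ)/2 * ν))⁻¹ := by
      rw [hgdef]
      dsimp only
      rw [show -ν / 2 = -((1:ℝ)/2 * ν) by ring, Real.rpow_neg hb.le]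
    rw [hgy, ← div_eq_mul_inv, le_div_iff₀ hp, mul_comm]
    exact h
  have hg_le_one : ∀ y, g y ≤ 1 := by
    intro y
    exact Real.rpow_le_one_of_one_le_of_nonpos (by nlinarith [sq_nonneg ‖y‖]) (by linarith)
  have hg_int : Integrable g := by
    have hfin : (Module.finrank ℝ (EuclideanSpace ℝ (Fin d)) : ℝ) < ν := by
      rw [finrank_euclideanSpace_fin]; exact hν
    exact integrable_rpow_neg_one_add_norm_sq hfin
  set ind : EuclideanSpace ℝ (Fin d) → ℝ :=
    (Metric.ball (0 : EuclideanSpace ℝ (Fin d)) 1).indicator (fun w => ‖w‖ ^ ((2:ℝ) - d))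
    with hinddef
  have hind_nonneg : ∀ z, 0 ≤ ind z := fun z =>
    indicator_nonneg (fun w _ => rpow_nonneg (norm_nonneg _) _) z
  have hind_int : Integrable ind :=
    (integrable_indicator_iff measurableSet_ball).2 (aux_integrableOn_rpow_ball d hs1a hs1b)
  have hK_le : ∀ z : EuclideanSpace ℝ (Fin d), |K z| ≤ C * ind z + C := by
    intro z
    by_cases hz : ‖z‖ < 1
    · rw [hinddef]
      rw [indicator_of_mem (mem_ball_zero_iff.2 hz)]
      have := hK1 z hz
      linarith
    · push_neg at hz
      rw [hinddef, indicator_of_notMem (fun h => absurd (mem_ball_zero_iff.1 h) (not_lt.2 hz)),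
        mul_zero, zero_add]
      refine (hK2 z hz).trans ?_
      have h1 : ‖z‖ ^ ((1 - (d:ℝ))/2) ≤ 1 :=
        Real.rpow_le_one_of_one_le_of_nonpos hz (by linarith)
      nlinarith
  have hF_le : ∀ x z, |K z * v (x - z)| ≤ (C * M) * (ind z + g (x - z)) := by
    intro x z
    rw [abs_mul]
    by_cases hz : ‖z‖ < 1
    · have h1 : |K z| ≤ C * ind z := by
        rw [hinddef, indicator_of_mem (mem_ball_zero_iff.2 hz)]
        exact hK1 z hz
      have h2 : |v (x - z)| ≤ M := by
        refine (hvle _).trans ?_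
        nlinarith [hg_le_one (x - z), hg_pos (x - z), hvle (x-z), abs_nonneg (v (x-z))]
      have hKnn := abs_nonneg (K z)
      have hvnn := abs_nonneg (v (x - z))
      have hgnn := (hg_pos (x - z)).le
      have hindnn := hind_nonneg z
      nlinarith [mul_le_mul h1 h2 hvnn (by positivity : (0:ℝ) ≤ C * ind z),
        mul_nonneg (mul_nonneg hC.le hM0) hgnn]
    · push_neg at hz
      have h1 : |K z| ≤ C := by
        refine (hK2 z hz).trans ?_
        have := Real.rpow_le_one_of_one_le_of_nonpos hz (by linarith : (1 - (d:ℝ))/2 ≤ 0)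
        nlinarith
      have h2 : |v (x - z)| ≤ M * g (x - z) := hvle _
      have hKnn := abs_nonneg (K z)
      have hindnn := hind_nonneg z
      nlinarith [mul_le_mul h1 h2 (abs_nonneg _) hC.le,
        mul_nonneg (mul_nonneg hC.le hM0) hindnn]
  have hInt : ∀ x, Integrable (fun z => K z * v (x - z)) := by
    intro x
    refine Integrable.mono' (((hind_int.add (hg_int.comp_sub_left x)).const_mul (C * M)))
      (hKmeas.aestronglyMeasurable.mul
        ((hv.comp (continuous_const.sub continuous_id)).aestronglyMeasurable)) ?_
    exact ae_of_all _ fun z => by simpa [Real.norm_eq_abs, abs_mul] using hF_le x z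
  refine ⟨hInt, ?_⟩
  set I₁ := ∫ z in Metric.ball (0 : EuclideanSpace ℝ (Fin d)) 1, ‖z‖ ^ ((2:ℝ) - d) with hI₁def
  set Iβ := ∫ z in Metric.ball (0 : EuclideanSpace ℝ (Fin d)) 1, ‖z‖ ^ ((1 - (d:ℝ))/2)
    with hIβdef
  set A := ∫ y : EuclideanSpace ℝ (Fin d), g y with hAdef
  have hI₁nn : 0 ≤ I₁ :=
    setIntegral_nonneg measurableSet_ball fun z _ => rpow_nonneg (norm_nonneg _) _
  have hIβnn : 0 ≤ Iβ :=
    setIntegral_nonneg measurableSet_ball fun z _ => rpow_nonneg (norm_nonneg _) _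
  have hAnn : 0 ≤ A := integral_nonneg fun y => (hg_pos y).le
  have h2ν : (1:ℝ) ≤ 2 ^ ν := Real.one_le_rpow one_le_two hν0.le
  have h3d : (1:ℝ) ≤ 3 ^ (d:ℕ) := one_le_pow₀ (by norm_num)
  refine ⟨C * 3 ^ (d:ℕ) * 2 ^ ν * (I₁ + Iβ + A + 1), by positivity, ?_⟩
  intro x
  set b := (1 + ‖x‖ ^ 2) ^ ((1:ℝ)/2) with hbdef
  have hBpos : (0:ℝ) < 1 + ‖x‖ ^ 2 := by positivity
  have hb1 : (1:ℝ) ≤ b := by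
    have h := Real.rpow_le_rpow zero_le_one
      (by linarith [sq_nonneg ‖x‖] : (1:ℝ) ≤ 1 + ‖x‖ ^ 2) (by norm_num : (0:ℝ) ≤ 1/2)
    rwa [Real.one_rpow] at h
  have hb0 : (0:ℝ) < b := lt_of_lt_of_le one_pos hb1
  have hxb : ‖x‖ ≤ b := by
    have h := Real.rpow_le_rpow (by positivity)
      (by linarith : (‖x‖:ℝ) ^ 2 ≤ 1 + ‖x‖ ^ 2) (by norm_num : (0:ℝ) ≤ 1/2)
    have h2 : ((‖x‖:ℝ) ^ 2) ^ ((1:ℝ)/2) = ‖x‖ := by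
      rw [← Real.rpow_natCast ‖x‖ 2, ← Real.rpow_mul (norm_nonneg x)]
      norm_num
    rw [h2] at h
    exact h
  have hbx1 : b ≤ 1 + ‖x‖ := by
    have h1 : (1 + ‖x‖ ^ 2 : ℝ) ≤ (1 + ‖x‖) ^ 2 := by nlinarith [norm_nonneg x]
    have h := Real.rpow_le_rpow hBpos.le h1 (by norm_num : (0:ℝ) ≤ 1/2)
    have h2 : ((1 + ‖x‖ : ℝ) ^ 2) ^ ((1:ℝ)/2) = 1 + ‖x‖ := by
      rw [← Real.rpow_natCast (1 + ‖x‖) 2, ← Real.rpow_mul (by positivity)]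
      norm_num
    rw [h2] at h
    exact h
  have hbw0 : (0:ℝ) ≤ b ^ (((d:ℝ) - 1)/2) := rpow_nonneg hb0.le _
  by_cases hx2 : ‖x‖ ≤ 2
  · -- small x
    have hb3 : b ≤ 3 := by linarith
    have hbpow : b ^ (((d:ℝ) - 1)/2) ≤ 3 ^ (d:ℕ) := by
      calc b ^ (((d:ℝ) - 1)/2) ≤ (3:ℝ) ^ (((d:ℝ) - 1)/2) :=
            Real.rpow_le_rpow hb0.le hb3 (by linarith)
        _ ≤ (3:ℝ) ^ ((d:ℝ)) := Real.rpow_le_rpow_of_exponent_le (by norm_num) (by linarith)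
        _ = 3 ^ (d:ℕ) := by rw [Real.rpow_natCast]
    have habs : |∫ z, K z * v (x - z)| ≤ (C * M) * (I₁ + A) := by
      have h1 : |∫ z, K z * v (x - z)| ≤ ∫ z, |K z * v (x - z)| := by
        simpa only [Real.norm_eq_abs] using
          norm_integral_le_integral_norm (μ := volume) (fun z => K z * v (x - z))
      have h2 : (∫ z, |K z * v (x - z)|) ≤ ∫ z, (C * M) * (ind z + g (x - z)) := by
        refine integral_mono (hInt x).abs
          (((hind_int.add (hg_int.comp_sub_left x)).const_mul (C * M))) (hF_le x)
      have h3 : (∫ z, (C * M) * (ind z + g (x - z))) = (C * M) * (I₁ + A) := by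
        rw [integral_const_mul, integral_add hind_int (hg_int.comp_sub_left x),
          hinddef, integral_indicator measurableSet_ball,
          integral_sub_left_eq_self g volume x]
      linarith
    calc b ^ (((d:ℝ) - 1)/2) * |∫ z, K z * v (x - z)|
        ≤ 3 ^ (d:ℕ) * ((C * M) * (I₁ + A)) :=
          mul_le_mul hbpow habs (abs_nonneg _) (by positivity)
      _ ≤ C * 3 ^ (d:ℕ) * 2 ^ ν * (I₁ + Iβ + A + 1) * M := by
          have e1 : (3:ℝ) ^ (d:ℕ) * ((C * M) * (I₁ + A)) =
              C * 3 ^ (d:ℕ) * (I₁ + A) * M := by ring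
          rw [e1]
          have h4 : (I₁ + A : ℝ) ≤ 2 ^ ν * (I₁ + Iβ + A + 1) := by nlinarith
          have h5 : (0:ℝ) ≤ C * 3 ^ (d:ℕ) := by positivity
          calc C * 3 ^ (d:ℕ) * (I₁ + A) * M ≤ C * 3 ^ (d:ℕ) * (2 ^ ν * (I₁ + Iβ + A + 1)) * M := by
                apply mul_le_mul_of_nonneg_right _ hM0
                exact mul_le_mul_of_nonneg_left h4 h5
            _ = C * 3 ^ (d:ℕ) * 2 ^ ν * (I₁ + Iβ + A + 1) * M := by ring
  · -- large x
    push_neg at hx2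
    set r := ‖x‖ / 2 with hrdef
    have hr1 : (1:ℝ) < r := by rw [hrdef]; linarith
    have hr0 : (0:ℝ) < r := by linarith
    set S := Metric.closedBall (0 : EuclideanSpace ℝ (Fin d)) r with hSdef
    have hSmeas : MeasurableSet S := measurableSet_closedBall
    have hgS : ∀ z ∈ S, g (x - z) ≤ 2 ^ ν * b ^ (-ν) := by
      intro z hz
      have hz' : ‖z‖ ≤ r := mem_closedBall_zero_iff.1 hz
      have hxz : r ≤ ‖x - z‖ := by
        have h := norm_sub_norm_le x z
        rw [hrdef]
        rw [hrdef] at hz'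
        linarith
      have h4 : (1 + ‖x‖ ^ 2) / 4 ≤ 1 + ‖x - z‖ ^ 2 := by
        have h5 : r ^ 2 ≤ ‖x - z‖ ^ 2 := by nlinarith
        rw [hrdef] at h5
        nlinarith
      have hbase : (0:ℝ) < (1 + ‖x‖ ^ 2) / 4 := by positivity
      have h6 : g (x - z) ≤ ((1 + ‖x‖ ^ 2) / 4) ^ (-ν / 2) := by
        rw [hgdef]
        dsimp only
        exact Real.rpow_le_rpow_of_nonpos hbase h4 (by linarith)
      refine h6.trans (le_of_eq ?_)
      have e4 : (4:ℝ) ^ (-ν/2) = ((2:ℝ) ^ ν)⁻¹ := by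
        rw [show (4:ℝ) = (2:ℝ) ^ (2:ℕ) by norm_num, ← Real.rpow_natCast 2 2,
          ← Real.rpow_mul (by norm_num : (0:ℝ) ≤ 2),
          show ((2:ℕ):ℝ) * (-ν/2) = -ν by push_cast; ring,
          Real.rpow_neg (by norm_num : (0:ℝ) ≤ 2)]
      have e5 : b ^ (-ν) = (1 + ‖x‖ ^ 2) ^ (-ν/2) := by
        rw [hbdef, ← Real.rpow_mul hBpos.le]
        congr 1
        ring
      calc ((1 + ‖x‖ ^ 2)/4) ^ (-ν/2)
          = (1 + ‖x‖ ^ 2) ^ (-ν/2) / (4:ℝ) ^ (-ν/2) :=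
            Real.div_rpow hBpos.le (by norm_num : (0:ℝ) ≤ 4) _
        _ = b ^ (-ν) / ((2:ℝ) ^ ν)⁻¹ := by rw [e4, e5]
        _ = 2 ^ ν * b ^ (-ν) := by rw [div_eq_mul_inv, inv_inv, mul_comm]
    have hKS_int : IntegrableOn (fun z => |K z|) S := by
      have hconst : IntegrableOn (fun _ : EuclideanSpace ℝ (Fin d) => C) S :=
        integrableOn_const measure_closedBall_lt_top.ne
      have hind_on : IntegrableOn ind S := hind_int.integrableOn
      refine Integrable.mono' ((hind_on.const_mul C).add hconst)
        ((hKmeas.abs).aestronglyMeasurable.restrict) (ae_of_all _ fun z => ?_)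
      simpa [Real.norm_eq_abs, abs_abs] using hK_le z
    have hx0 : (0:ℝ) < ‖x‖ := by linarith
    obtain ⟨hscale_int, hscale_val⟩ := aux_scale d hs2a hs2b hx0
    have hSsub : S ⊆ Metric.ball (0 : EuclideanSpace ℝ (Fin d)) ‖x‖ := by
      intro z hz
      rw [mem_ball_zero_iff]
      have h := mem_closedBall_zero_iff.1 hz
      rw [hrdef] at h
      linarith
    have hKSbound : ∫ z in S, |K z| ≤
        C * I₁ + C * (‖x‖ ^ ((d:ℝ) + (1 - (d:ℝ))/2) * Iβ) := by
      rw [← integral_inter_add_diff measurableSet_ball hKS_int]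
      have hp1 : ∫ z in S ∩ Metric.ball 0 1, |K z| ≤ C * I₁ := by
        have hint2 : IntegrableOn (fun z : EuclideanSpace ℝ (Fin d) => C * ‖z‖ ^ ((2:ℝ) - d))
            (S ∩ Metric.ball 0 1) :=
          ((aux_integrableOn_rpow_ball d hs1a hs1b).mono_set inter_subset_right).const_mul C
        refine le_trans (setIntegral_mono_on (hKS_int.mono_set inter_subset_left) hint2
          (hSmeas.inter measurableSet_ball) fun z hz => hK1 z (mem_ball_zero_iff.1 hz.2)) ?_
        rw [integral_const_mul]
        refine mul_le_mul_of_nonneg_left ?_ hC.le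
        exact setIntegral_mono_set (aux_integrableOn_rpow_ball d hs1a hs1b)
          (ae_of_all _ fun z => rpow_nonneg (norm_nonneg _) _)
          (HasSubset.Subset.eventuallyLE inter_subset_right)
      have hp2 : ∫ z in S \ Metric.ball 0 1, |K z| ≤
          C * (‖x‖ ^ ((d:ℝ) + (1 - (d:ℝ))/2) * Iβ) := by
        have hsub2 : S \ Metric.ball 0 1 ⊆ Metric.ball (0 : EuclideanSpace ℝ (Fin d)) ‖x‖ :=
          (diff_subset).trans hSsub
        have hint2 : IntegrableOn (fun z : EuclideanSpace ℝ (Fin d) => C * ‖z‖ ^ ((1 - (d:ℝ))/2))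
            (S \ Metric.ball 0 1) := (hscale_int.mono_set hsub2).const_mul C
        refine le_trans (setIntegral_mono_on (hKS_int.mono_set diff_subset) hint2
          (hSmeas.diff measurableSet_ball) fun z hz =>
            hK2 z (by simpa [mem_ball_zero_iff] using hz.2)) ?_
        rw [integral_const_mul]
        refine mul_le_mul_of_nonneg_left ?_ hC.le
        calc ∫ z in S \ Metric.ball 0 1, ‖z‖ ^ ((1 - (d:ℝ))/2)
            ≤ ∫ z in Metric.ball (0 : EuclideanSpace ℝ (Fin d)) ‖x‖, ‖z‖ ^ ((1 - (d:ℝ))/2) :=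
              setIntegral_mono_set hscale_int
                (ae_of_all _ fun z => rpow_nonneg (norm_nonneg _) _)
                (HasSubset.Subset.eventuallyLE hsub2)
          _ = ‖x‖ ^ ((d:ℝ) + (1 - (d:ℝ))/2) * Iβ := hscale_val
      linarith
    have hS_region : |∫ z in S, K z * v (x - z)| ≤
        (M * (2 ^ ν * b ^ (-ν))) * (C * I₁ + C * (‖x‖ ^ ((d:ℝ) + (1 - (d:ℝ))/2) * Iβ)) := by
      have h1 : |∫ z in S, K z * v (x - z)| ≤ ∫ z in S, |K z * v (x - z)| := by
        simpa only [Real.norm_eq_abs] using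
          norm_integral_le_integral_norm (μ := volume.restrict S) (fun z => K z * v (x - z))
      have hnn : 0 ≤ M * (2 ^ ν * b ^ (-ν)) :=
        mul_nonneg hM0 (mul_nonneg (Real.rpow_nonneg (by norm_num) _) (Real.rpow_nonneg hb0.le _))
      have h2 : ∫ z in S, |K z * v (x - z)| ≤ ∫ z in S, (M * (2 ^ ν * b ^ (-ν))) * |K z| := by
        refine setIntegral_mono_on ((hInt x).abs.integrableOn) (hKS_int.const_mul _) hSmeas ?_
        intro z hz
        rw [abs_mul]
        have hv2 : |v (x - z)| ≤ M * (2 ^ ν * b ^ (-ν)) :=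
          (hvle _).trans (mul_le_mul_of_nonneg_left (hgS z hz) hM0)
        calc |K z| * |v (x - z)| ≤ |K z| * (M * (2 ^ ν * b ^ (-ν))) :=
              mul_le_mul_of_nonneg_left hv2 (abs_nonneg _)
          _ = (M * (2 ^ ν * b ^ (-ν))) * |K z| := by ring
      calc |∫ z in S, K z * v (x - z)| ≤ ∫ z in S, |K z * v (x - z)| := h1
        _ ≤ (M * (2 ^ ν * b ^ (-ν))) * ∫ z in S, |K z| := by
            rw [← integral_const_mul]; exact h2
        _ ≤ _ := mul_le_mul_of_nonneg_left hKSbound hnn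
    have hSc_region : |∫ z in Sᶜ, K z * v (x - z)| ≤ (C * r ^ ((1 - (d:ℝ))/2) * M) * A := by
      have hKc : ∀ z ∈ Sᶜ, |K z| ≤ C * r ^ ((1 - (d:ℝ))/2) := by
        intro z hz
        have hz' : r < ‖z‖ := by
          by_contra hcon
          push_neg at hcon
          exact hz (mem_closedBall_zero_iff.2 hcon)
        refine (hK2 z (by linarith)).trans (mul_le_mul_of_nonneg_left ?_ hC.le)
        exact Real.rpow_le_rpow_of_nonpos hr0 hz'.le (by linarith)
      have h1 : |∫ z in Sᶜ, K z * v (x - z)| ≤ ∫ z in Sᶜ, |K z * v (x - z)| := by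
        simpa only [Real.norm_eq_abs] using
          norm_integral_le_integral_norm (μ := volume.restrict Sᶜ) (fun z => K z * v (x - z))
      have hnn : 0 ≤ C * r ^ ((1 - (d:ℝ))/2) * M :=
        mul_nonneg (mul_nonneg hC.le (Real.rpow_nonneg hr0.le _)) hM0
      have h2 : ∫ z in Sᶜ, |K z * v (x - z)| ≤
          ∫ z in Sᶜ, (C * r ^ ((1 - (d:ℝ))/2) * M) * g (x - z) := by
        refine setIntegral_mono_on ((hInt x).abs.integrableOn)
          (((hg_int.comp_sub_left x).const_mul _).integrableOn) hSmeas.compl ?_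
        intro z hz
        rw [abs_mul]
        calc |K z| * |v (x - z)| ≤ (C * r ^ ((1 - (d:ℝ))/2)) * (M * g (x - z)) :=
              mul_le_mul (hKc z hz) (hvle _) (abs_nonneg _)
                (mul_nonneg hC.le (Real.rpow_nonneg hr0.le _))
          _ = (C * r ^ ((1 - (d:ℝ))/2) * M) * g (x - z) := by ring
      have h4 : ∫ z in Sᶜ, g (x - z) ≤ A := by
        refine le_trans (setIntegral_le_integral (hg_int.comp_sub_left x)
          (ae_of_all _ fun z => (hg_pos _).le)) ?_
        rw [integral_sub_left_eq_self g volume x]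
      calc |∫ z in Sᶜ, K z * v (x - z)| ≤ ∫ z in Sᶜ, |K z * v (x - z)| := h1
        _ ≤ (C * r ^ ((1 - (d:ℝ))/2) * M) * ∫ z in Sᶜ, g (x - z) := by
            rw [← integral_const_mul]; exact h2
        _ ≤ _ := mul_le_mul_of_nonneg_left h4 hnn
    have hkey2 : b ^ (((d:ℝ) - 1)/2) * b ^ (-ν) ≤ 1 := by
      rw [← Real.rpow_add hb0]
      exact Real.rpow_le_one_of_one_le_of_nonpos hb1 (by linarith)
    have hkey1 : b ^ (((d:ℝ) - 1)/2) * (b ^ (-ν) * ‖x‖ ^ ((d:ℝ) + (1 - (d:ℝ))/2)) ≤ 1 := by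
      have hx' : ‖x‖ ^ ((d:ℝ) + (1 - (d:ℝ))/2) ≤ b ^ ((d:ℝ) + (1 - (d:ℝ))/2) :=
        Real.rpow_le_rpow (norm_nonneg x) hxb (by linarith)
      calc b ^ (((d:ℝ) - 1)/2) * (b ^ (-ν) * ‖x‖ ^ ((d:ℝ) + (1 - (d:ℝ))/2))
          ≤ b ^ (((d:ℝ) - 1)/2) * (b ^ (-ν) * b ^ ((d:ℝ) + (1 - (d:ℝ))/2)) := by
            refine mul_le_mul_of_nonneg_left ?_ hbw0
            exact mul_le_mul_of_nonneg_left hx' (Real.rpow_nonneg hb0.le _)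
        _ = b ^ ((((d:ℝ) - 1)/2) + (-ν + ((d:ℝ) + (1 - (d:ℝ))/2))) := by
            rw [← Real.rpow_add hb0, ← Real.rpow_add hb0]
        _ ≤ 1 := Real.rpow_le_one_of_one_le_of_nonpos hb1 (by linarith)
    have hkey3 : b ^ (((d:ℝ) - 1)/2) * r ^ ((1 - (d:ℝ))/2) ≤ 3 ^ (d:ℕ) := by
      have hrb : b / 3 ≤ r := by
        rw [hrdef]
        linarith
      have h1 : r ^ ((1 - (d:ℝ))/2) ≤ (b/3) ^ ((1 - (d:ℝ))/2) :=
        Real.rpow_le_rpow_of_nonpos (by positivity) hrb (by linarith)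
      have h3 : ((3:ℝ) ^ ((1 - (d:ℝ))/2))⁻¹ = (3:ℝ) ^ (((d:ℝ) - 1)/2) := by
        rw [← Real.rpow_neg (by norm_num : (0:ℝ) ≤ 3)]
        congr 1
        ring
      have h2 : (b/3 : ℝ) ^ ((1 - (d:ℝ))/2) = b ^ ((1 - (d:ℝ))/2) * (3:ℝ) ^ (((d:ℝ) - 1)/2) := by
        rw [Real.div_rpow hb0.le (by norm_num : (0:ℝ) ≤ 3) ((1 - (d:ℝ))/2), div_eq_mul_inv, h3]
      have h5 : b ^ (((d:ℝ) - 1)/2) * b ^ ((1 - (d:ℝ))/2) = 1 := by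
        rw [← Real.rpow_add hb0, show ((d:ℝ) - 1)/2 + (1 - (d:ℝ))/2 = 0 by ring,
          Real.rpow_zero]
      calc b ^ (((d:ℝ) - 1)/2) * r ^ ((1 - (d:ℝ))/2)
          ≤ b ^ (((d:ℝ) - 1)/2) * (b ^ ((1 - (d:ℝ))/2) * (3:ℝ) ^ (((d:ℝ) - 1)/2)) := by
            refine mul_le_mul_of_nonneg_left ?_ hbw0
            rw [← h2]
            exact h1
        _ = (3:ℝ) ^ (((d:ℝ) - 1)/2) := by rw [← mul_assoc, h5, one_mul]
        _ ≤ (3:ℝ) ^ ((d:ℝ)) := Real.rpow_le_rpow_of_exponent_le (by norm_num) (by linarith)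
        _ = 3 ^ (d:ℕ) := by rw [Real.rpow_natCast]
    have hsplit : ∫ z, K z * v (x - z) =
        (∫ z in S, K z * v (x - z)) + ∫ z in Sᶜ, K z * v (x - z) :=
      (integral_add_compl hSmeas (hInt x)).symm
    have htot : |∫ z, K z * v (x - z)| ≤
        (M * (2 ^ ν * b ^ (-ν))) * (C * I₁ + C * (‖x‖ ^ ((d:ℝ) + (1 - (d:ℝ))/2) * Iβ)) +
          (C * r ^ ((1 - (d:ℝ))/2) * M) * A := by
      rw [hsplit]
      exact le_trans (abs_add_le _ _) (add_le_add hS_region hSc_region)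
    have hmono := mul_le_mul_of_nonneg_left htot hbw0
    have e : b ^ (((d:ℝ) - 1)/2) *
        ((M * (2 ^ ν * b ^ (-ν))) * (C * I₁ + C * (‖x‖ ^ ((d:ℝ) + (1 - (d:ℝ))/2) * Iβ)) +
          (C * r ^ ((1 - (d:ℝ))/2) * M) * A) =
        ((2:ℝ) ^ ν * C * M * I₁) * (b ^ (((d:ℝ) - 1)/2) * b ^ (-ν)) +
          ((2:ℝ) ^ ν * C * M * Iβ) *
            (b ^ (((d:ℝ) - 1)/2) * (b ^ (-ν) * ‖x‖ ^ ((d:ℝ) + (1 - (d:ℝ))/2))) +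
          (C * M * A) * (b ^ (((d:ℝ) - 1)/2) * r ^ ((1 - (d:ℝ))/2)) := by ring
    rw [e] at hmono
    have hP0 : (0:ℝ) ≤ 2 ^ ν := Real.rpow_nonneg (by norm_num) _
    have c1 : (0:ℝ) ≤ 2 ^ ν * C * M * I₁ :=
      mul_nonneg (mul_nonneg (mul_nonneg hP0 hC.le) hM0) hI₁nn
    have c2 : (0:ℝ) ≤ 2 ^ ν * C * M * Iβ :=
      mul_nonneg (mul_nonneg (mul_nonneg hP0 hC.le) hM0) hIβnn
    have c3 : (0:ℝ) ≤ C * M * A := mul_nonneg (mul_nonneg hC.le hM0) hAnn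
    have hstep : b ^ (((d:ℝ) - 1)/2) * |∫ z, K z * v (x - z)| ≤
        (2:ℝ) ^ ν * C * M * I₁ + (2:ℝ) ^ ν * C * M * Iβ + (C * M * A) * 3 ^ (d:ℕ) := by
      refine hmono.trans (add_le_add (add_le_add ?_ ?_) ?_)
      · simpa using mul_le_mul_of_nonneg_left hkey2 c1
      · simpa using mul_le_mul_of_nonneg_left hkey1 c2
      · exact mul_le_mul_of_nonneg_left hkey3 c3
    refine hstep.trans ?_
    have t1 : (0:ℝ) ≤ (2 ^ ν * C * M * I₁) * (3 ^ (d:ℕ) - 1) :=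
      mul_nonneg c1 (by linarith)
    have t2 : (0:ℝ) ≤ (2 ^ ν * C * M * Iβ) * (3 ^ (d:ℕ) - 1) :=
      mul_nonneg c2 (by linarith)
    have t3 : (0:ℝ) ≤ (C * M * A * 3 ^ (d:ℕ)) * (2 ^ ν - 1) :=
      mul_nonneg (mul_nonneg c3 (by linarith)) (by linarith)
    have t4 : (0:ℝ) ≤ C * 3 ^ (d:ℕ) * 2 ^ ν * M :=
      mul_nonneg (mul_nonneg (mul_nonneg hC.le (by linarith)) hP0) hM0
    linarith [t1, t2, t3, t4]
end

section
/- Suppose K : ℝ^d → ℝ satisfies |K(x)| ≤ C|x|^{2−d} for |x| < 1 and |K(x)| ≤ C|x|^{(1−d)/2} for |x| ≥ 1, with d ≥ 4. Then for any continuous v with ‖v‖_{(d−1)/2} := sup_x ⟨x⟩^{(d−1)/2} |v(x)| < ∞, the convolution K ∗ (v³) satisfies sup_x ⟨x⟩^{(d−1)/2} |K ∗ (v³)(x)| ≤ C' ‖v‖³_{(d−1)/2} for a constant C' depending only on d and C. -/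
open MeasureTheory Metric
open scoped ENNReal

section auxlemmas

variable {d : ℕ}

private lemma jw_pos (x : EuclideanSpace ℝ (Fin d)) :
    0 < (1 + ‖x‖ ^ 2) ^ ((1 : ℝ) / 2) :=
  Real.rpow_pos_of_pos (by positivity) _

private lemma jw_sq (x : EuclideanSpace ℝ (Fin d)) :
    ((1 + ‖x‖ ^ 2) ^ ((1 : ℝ) / 2)) ^ (2 : ℕ) = 1 + ‖x‖ ^ 2 := by
  rw [← Real.rpow_natCast ((1 + ‖x‖ ^ 2) ^ ((1 : ℝ) / 2)) 2,
    ← Real.rpow_mul (by positivity)]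
  norm_num

private lemma one_le_jw (x : EuclideanSpace ℝ (Fin d)) :
    1 ≤ (1 + ‖x‖ ^ 2) ^ ((1 : ℝ) / 2) :=
  Real.one_le_rpow (by nlinarith [sq_nonneg ‖x‖]) (by norm_num)

private lemma norm_le_jw (x : EuclideanSpace ℝ (Fin d)) :
    ‖x‖ ≤ (1 + ‖x‖ ^ 2) ^ ((1 : ℝ) / 2) := by
  nlinarith [jw_sq x, jw_pos x, norm_nonneg x]

private lemma jw_le (x : EuclideanSpace ℝ (Fin d)) :
    (1 + ‖x‖ ^ 2) ^ ((1 : ℝ) / 2) ≤ 1 + ‖x‖ := by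
  nlinarith [jw_sq x, jw_pos x, norm_nonneg x]

/-- If `a ≤ c * b` with everything positive and `0 ≤ e`, then `b ^ (-e) ≤ c ^ e * a ^ (-e)`. -/
private lemma rpow_neg_le_of_le {a b c e : ℝ} (ha : 0 < a) (hb : 0 < b) (hc : 0 < c)
    (hab : a ≤ c * b) (he : 0 ≤ e) : b ^ (-e) ≤ c ^ e * a ^ (-e) := by
  have h1 : a ^ e ≤ c ^ e * b ^ e := by
    rw [← Real.mul_rpow hc.le hb.le]
    exact Real.rpow_le_rpow ha.le hab he
  have hae : 0 < a ^ e := Real.rpow_pos_of_pos ha e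
  have hbe : 0 < b ^ e := Real.rpow_pos_of_pos hb e
  rw [Real.rpow_neg hb.le, Real.rpow_neg ha.le, inv_eq_one_div, ← div_eq_mul_inv,
    div_le_div_iff₀ hbe hae, one_mul]
  linarith

private lemma integrable_jw (d : ℕ) {r : ℝ} (hr : (d : ℝ) < r) :
    Integrable (fun y : EuclideanSpace ℝ (Fin d) =>
      ((1 + ‖y‖ ^ 2) ^ ((1 : ℝ) / 2)) ^ (-r)) := by
  have h := integrable_rpow_neg_one_add_norm_sq
    (E := EuclideanSpace ℝ (Fin d)) (μ := volume) (r := r)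
    (by rwa [finrank_euclideanSpace_fin])
  have e : ∀ y : EuclideanSpace ℝ (Fin d),
      ((1 + ‖y‖ ^ 2) ^ ((1 : ℝ) / 2)) ^ (-r) = (1 + ‖y‖ ^ 2) ^ (-r / 2) := fun y => by
    rw [← Real.rpow_mul (by positivity)]
    ring_nf
  simpa only [e] using h

private lemma integrableOn_riesz (d : ℕ) (hd : 4 ≤ d) :
    IntegrableOn (fun z : EuclideanSpace ℝ (Fin d) => ‖z‖ ^ ((2 : ℝ) - d))
      (ball (0 : EuclideanSpace ℝ (Fin d)) 1) := by
  classical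
  haveI : Nonempty (Fin d) := ⟨⟨0, by omega⟩⟩
  haveI : Nontrivial (EuclideanSpace ℝ (Fin d)) :=
    Module.nontrivial_of_finrank_pos (R := ℝ)
      (by rw [finrank_euclideanSpace_fin]; omega)
  have hd2 : (2:ℝ) - d ≤ 0 := by
    have : (4:ℝ) ≤ d := by exact_mod_cast hd
    linarith
  constructor
  · exact (Measurable.aestronglyMeasurable (by fun_prop))
  · rw [hasFiniteIntegral_iff_norm]
    have hnrm : ∀ z : EuclideanSpace ℝ (Fin d),
        ENNReal.ofReal ‖‖z‖ ^ ((2 : ℝ) - d)‖ = ENNReal.ofReal (‖z‖ ^ ((2 : ℝ) - d)) :=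
      fun z => by rw [Real.norm_of_nonneg (Real.rpow_nonneg (norm_nonneg z) _)]
    simp only [hnrm]
    set A : ℕ → Set (EuclideanSpace ℝ (Fin d)) := fun n =>
      ball (0 : EuclideanSpace ℝ (Fin d)) ((1/2 : ℝ) ^ n) \ ball 0 ((1/2 : ℝ) ^ (n+1)) with hA
    have hsub : ball (0 : EuclideanSpace ℝ (Fin d)) 1 ⊆ {0} ∪ ⋃ n, A n := by
      intro z hz
      rcases eq_or_ne z 0 with rfl | hz0
      · exact Or.inl rfl
      refine Or.inr ?_
      have hz1 : ‖z‖ < 1 := mem_ball_zero_iff.mp hz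
      have hzpos : 0 < ‖z‖ := norm_pos_iff.mpr hz0
      have hex : ∃ n : ℕ, (1/2 : ℝ) ^ (n+1) ≤ ‖z‖ := by
        obtain ⟨n, hn⟩ := exists_pow_lt_of_lt_one hzpos (by norm_num : (1/2 : ℝ) < 1)
        exact ⟨n, le_trans (pow_le_pow_of_le_one (by norm_num) (by norm_num) (Nat.le_succ n)) hn.le⟩
      have hup : ‖z‖ < (1/2 : ℝ) ^ (Nat.find hex) := by
        rcases Nat.eq_zero_or_pos (Nat.find hex) with h0 | h0
        · rw [h0, pow_zero]; exact hz1
        · have hmin := Nat.find_min hex (m := Nat.find hex - 1) (by omega)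
          rw [show Nat.find hex - 1 + 1 = Nat.find hex by omega] at hmin
          exact lt_of_not_ge hmin
      exact Set.mem_iUnion.mpr ⟨Nat.find hex, mem_ball_zero_iff.mpr hup,
        fun hmem => absurd (Nat.find_spec hex) (not_le.mpr (mem_ball_zero_iff.mp hmem))⟩
    have hbound : ∀ n, (∫⁻ z in A n, ENNReal.ofReal (‖z‖ ^ ((2 : ℝ) - d))) ≤
        ENNReal.ofReal ((2:ℝ) ^ ((d:ℝ) - 2) * (1/4 : ℝ) ^ n) *
          volume (ball (0 : EuclideanSpace ℝ (Fin d)) 1) := by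
      intro n
      have hstep : ∀ z ∈ A n, ENNReal.ofReal (‖z‖ ^ ((2 : ℝ) - d)) ≤
          ENNReal.ofReal (((1/2 : ℝ) ^ (n+1)) ^ ((2 : ℝ) - d)) := by
        intro z hz
        apply ENNReal.ofReal_le_ofReal
        have hlow : (1/2 : ℝ) ^ (n+1) ≤ ‖z‖ :=
          not_lt.mp (fun h => hz.2 (mem_ball_zero_iff.mpr h))
        exact Real.rpow_le_rpow_of_nonpos (by positivity) hlow hd2
      calc (∫⁻ z in A n, ENNReal.ofReal (‖z‖ ^ ((2 : ℝ) - d)))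
          ≤ ∫⁻ _ in A n, ENNReal.ofReal (((1/2 : ℝ) ^ (n+1)) ^ ((2 : ℝ) - d)) :=
            setLIntegral_mono measurable_const hstep
        _ = ENNReal.ofReal (((1/2 : ℝ) ^ (n+1)) ^ ((2 : ℝ) - d)) * volume (A n) :=
            setLIntegral_const _ _
        _ ≤ ENNReal.ofReal (((1/2 : ℝ) ^ (n+1)) ^ ((2 : ℝ) - d)) *
            volume (ball (0 : EuclideanSpace ℝ (Fin d)) ((1/2 : ℝ) ^ n)) :=
            mul_le_mul_right (measure_mono Set.diff_subset) _
        _ = ENNReal.ofReal ((2:ℝ) ^ ((d:ℝ) - 2) * (1/4 : ℝ) ^ n) *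
            volume (ball (0 : EuclideanSpace ℝ (Fin d)) 1) := by
            rw [Measure.addHaar_ball (μ := (volume : Measure (EuclideanSpace ℝ (Fin d))))
                (0 : EuclideanSpace ℝ (Fin d)) (r := (1/2:ℝ)^n) (by positivity),
              ← mul_assoc, ← ENNReal.ofReal_mul (by positivity)]
            congr 2
            rw [finrank_euclideanSpace_fin]
            have h2 : ((1/2:ℝ)) ^ (n+1) = (2:ℝ) ^ (-(((n:ℝ))+1)) := by
              rw [show -((n:ℝ)+1) = -(((n+1 : ℕ)):ℝ) by push_cast; ring,
                Real.rpow_neg (by norm_num), Real.rpow_natCast, one_div, inv_pow]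
            have h3 : ((1/2:ℝ)) ^ n = (2:ℝ) ^ (-(n:ℝ)) := by
              rw [Real.rpow_neg (by norm_num), Real.rpow_natCast, one_div, inv_pow]
            have h4 : ((1/4:ℝ)) ^ n = (2:ℝ) ^ (-(2*(n:ℝ))) := by
              rw [show (1/4:ℝ) = (1/2)^2 by norm_num, ← pow_mul,
                show -(2*(n:ℝ)) = -(((2*n : ℕ)):ℝ) by push_cast; ring,
                Real.rpow_neg (by norm_num), Real.rpow_natCast, one_div, inv_pow]
            rw [h2, h3, h4, ← Real.rpow_natCast ((2:ℝ) ^ (-(n:ℝ))) d,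
              ← Real.rpow_mul (by norm_num : (0:ℝ) ≤ 2),
              ← Real.rpow_mul (by norm_num : (0:ℝ) ≤ 2),
              ← Real.rpow_add (by norm_num : (0:ℝ) < 2),
              ← Real.rpow_add (by norm_num : (0:ℝ) < 2)]
            congr 1
            ring
    calc (∫⁻ z in ball (0 : EuclideanSpace ℝ (Fin d)) 1, ENNReal.ofReal (‖z‖ ^ ((2 : ℝ) - d)))
        ≤ ∫⁻ z in ({0} ∪ ⋃ n, A n), ENNReal.ofReal (‖z‖ ^ ((2 : ℝ) - d)) :=
          lintegral_mono_set hsub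
      _ ≤ (∫⁻ z in ({0} : Set (EuclideanSpace ℝ (Fin d))), ENNReal.ofReal (‖z‖ ^ ((2 : ℝ) - d)))
            + ∫⁻ z in ⋃ n, A n, ENNReal.ofReal (‖z‖ ^ ((2 : ℝ) - d)) :=
          lintegral_union_le _ _ _
      _ ≤ 0 + ∑' n, ∫⁻ z in A n, ENNReal.ofReal (‖z‖ ^ ((2 : ℝ) - d)) :=
          add_le_add (le_of_eq (setLIntegral_measure_zero _ _ (measure_singleton 0)))
            (lintegral_iUnion_le _ _)
      _ ≤ ∑' n, ENNReal.ofReal ((2:ℝ) ^ ((d:ℝ) - 2) * (1/4 : ℝ) ^ n) *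
            volume (ball (0 : EuclideanSpace ℝ (Fin d)) 1) := by
          rw [zero_add]; exact ENNReal.tsum_le_tsum hbound
      _ = ENNReal.ofReal ((2:ℝ) ^ ((d:ℝ) - 2)) *
            ((∑' n : ℕ, (ENNReal.ofReal (1/4 : ℝ)) ^ n) *
              volume (ball (0 : EuclideanSpace ℝ (Fin d)) 1)) := by
          simp_rw [ENNReal.ofReal_mul (by positivity : (0:ℝ) ≤ (2:ℝ) ^ ((d:ℝ) - 2)),
            ENNReal.ofReal_pow (by norm_num : (0:ℝ) ≤ 1/4), mul_assoc,
            ENNReal.tsum_mul_left, ENNReal.tsum_mul_right]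
      _ < ⊤ := by
          refine ENNReal.mul_lt_top ENNReal.ofReal_lt_top
            (ENNReal.mul_lt_top ?_ measure_ball_lt_top)
          rw [ENNReal.tsum_geometric]
          exact ENNReal.inv_lt_top.mpr
            (tsub_pos_iff_lt.mpr (ENNReal.ofReal_lt_one.mpr (by norm_num)))

end auxlemmas

set_option maxHeartbeats 1000000 in
theorem convolution_cube_weighted_bound
    (d : ℕ) (hd : 4 ≤ d) (C : ℝ) (hC : 0 < C)
    (K : EuclideanSpace ℝ (Fin d) → ℝ) (hKmeas : Measurable K)
    (hK1 : ∀ x : EuclideanSpace ℝ (Fin d), ‖x‖ < 1 → |K x| ≤ C * ‖x‖ ^ ((2 : ℝ) - d))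
    (hK2 : ∀ x : EuclideanSpace ℝ (Fin d), 1 ≤ ‖x‖ → |K x| ≤ C * ‖x‖ ^ ((1 - (d : ℝ)) / 2))
    (v : EuclideanSpace ℝ (Fin d) → ℝ) (hv : Continuous v)
    (hvb : BddAbove
      (Set.range fun x => ((1 + ‖x‖ ^ 2) ^ ((1 : ℝ) / 2)) ^ (((d : ℝ) - 1) / 2) * |v x|)) :
    ∃ C' > 0, ∀ x : EuclideanSpace ℝ (Fin d),
      ((1 + ‖x‖ ^ 2) ^ ((1 : ℝ) / 2)) ^ (((d : ℝ) - 1) / 2) *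
          |∫ z, K z * v (x - z) ^ 3| ≤ C' * wnorm (((d : ℝ) - 1) / 2) v ^ 3 := by
  classical
  set ν : ℝ := ((d : ℝ) - 1) / 2 with hν
  have hd4 : (4 : ℝ) ≤ (d : ℝ) := by exact_mod_cast hd
  have hν1 : (3 : ℝ) / 2 ≤ ν := by rw [hν]; linarith
  have hν0 : 0 < ν := by linarith
  have hdr : (d : ℝ) < 3 * ν := by rw [hν]; linarith
  set M : ℝ := wnorm ν v with hM
  have hMub : ∀ y, ((1 + ‖y‖ ^ 2) ^ ((1 : ℝ) / 2)) ^ ν * |v y| ≤ M := fun y => le_ciSup hvb y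
  have hM0 : 0 ≤ M := le_trans (by positivity) (hMub 0)
  have hvbd : ∀ y, |v y| ≤ M * ((1 + ‖y‖ ^ 2) ^ ((1 : ℝ) / 2)) ^ (-ν) := by
    intro y
    have h2 : (0 : ℝ) < ((1 + ‖y‖ ^ 2) ^ ((1 : ℝ) / 2)) ^ ν := Real.rpow_pos_of_pos (jw_pos y) ν
    rw [Real.rpow_neg (jw_pos y).le, ← div_eq_mul_inv, le_div_iff₀ h2]
    calc |v y| * ((1 + ‖y‖ ^ 2) ^ ((1 : ℝ) / 2)) ^ ν
        = ((1 + ‖y‖ ^ 2) ^ ((1 : ℝ) / 2)) ^ ν * |v y| := mul_comm _ _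
      _ ≤ M := hMub y
  have hIntJ : Integrable (fun y : EuclideanSpace ℝ (Fin d) =>
      ((1 + ‖y‖ ^ 2) ^ ((1 : ℝ) / 2)) ^ (-(3 * ν))) := integrable_jw d hdr
  have hIntBall : IntegrableOn (fun z : EuclideanSpace ℝ (Fin d) => ‖z‖ ^ ((2 : ℝ) - d))
      (ball (0 : EuclideanSpace ℝ (Fin d)) 1) := integrableOn_riesz d hd
  set ind : EuclideanSpace ℝ (Fin d) → ℝ :=
    (ball (0 : EuclideanSpace ℝ (Fin d)) 1).indicator (fun z => ‖z‖ ^ ((2 : ℝ) - d)) with hind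
  have hIntInd : Integrable ind := hIntBall.integrable_indicator measurableSet_ball
  have hindnn : ∀ z, 0 ≤ ind z := fun z =>
    Set.indicator_nonneg (fun y _ => Real.rpow_nonneg (norm_nonneg y) _) z
  set c1 : ℝ := ∫ z, ind z with hc1def
  set c3 : ℝ := ∫ y : EuclideanSpace ℝ (Fin d),
    ((1 + ‖y‖ ^ 2) ^ ((1 : ℝ) / 2)) ^ (-(3 * ν)) with hc3def
  have hc1 : 0 ≤ c1 := integral_nonneg hindnn
  have hc3 : 0 ≤ c3 := integral_nonneg fun y => Real.rpow_nonneg (jw_pos y).le _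
  set c0 : ℝ := (3 : ℝ) ^ (3 * ν) + 2 ^ ν * 3 ^ ν with hc0
  have hc0pos : 0 < c0 := by positivity
  have hCc : 0 ≤ C * c0 * (c1 + 2 * c3) := by positivity
  refine ⟨C * c0 * (c1 + 2 * c3) + 1, by linarith, ?_⟩
  intro x
  -- the majorant
  set H : EuclideanSpace ℝ (Fin d) → ℝ := fun z =>
    ind z + (((1 + ‖z‖ ^ 2) ^ ((1 : ℝ) / 2)) ^ (-(3 * ν)) +
      ((1 + ‖x - z‖ ^ 2) ^ ((1 : ℝ) / 2)) ^ (-(3 * ν))) with hH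
  have hIntJx : Integrable (fun z : EuclideanSpace ℝ (Fin d) =>
      ((1 + ‖x - z‖ ^ 2) ^ ((1 : ℝ) / 2)) ^ (-(3 * ν))) := hIntJ.comp_sub_left x
  have hIntH : Integrable H := hIntInd.add (hIntJ.add hIntJx)
  have hBint : (∫ z : EuclideanSpace ℝ (Fin d),
      ((1 + ‖x - z‖ ^ 2) ^ ((1 : ℝ) / 2)) ^ (-(3 * ν))) = c3 := by
    rw [hc3def]
    exact integral_sub_left_eq_self
      (fun y : EuclideanSpace ℝ (Fin d) => ((1 + ‖y‖ ^ 2) ^ ((1 : ℝ) / 2)) ^ (-(3 * ν)))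
      volume x
  have hintH : ∫ z, H z = c1 + 2 * c3 := by
    calc ∫ z, H z
        = (∫ z, ind z) + ∫ z : EuclideanSpace ℝ (Fin d),
            (((1 + ‖z‖ ^ 2) ^ ((1 : ℝ) / 2)) ^ (-(3 * ν)) +
              ((1 + ‖x - z‖ ^ 2) ^ ((1 : ℝ) / 2)) ^ (-(3 * ν))) :=
          integral_add hIntInd (hIntJ.add hIntJx)
      _ = (∫ z, ind z) + ((∫ z : EuclideanSpace ℝ (Fin d),
            ((1 + ‖z‖ ^ 2) ^ ((1 : ℝ) / 2)) ^ (-(3 * ν))) +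
            ∫ z : EuclideanSpace ℝ (Fin d),
            ((1 + ‖x - z‖ ^ 2) ^ ((1 : ℝ) / 2)) ^ (-(3 * ν))) := by
          rw [integral_add hIntJ hIntJx]
      _ = c1 + 2 * c3 := by rw [hBint, ← hc1def, ← hc3def]; ring
  have hKB : ∀ z, |K z| ≤
      C * (if ‖z‖ < 1 then ‖z‖ ^ ((2 : ℝ) - d) else ‖z‖ ^ (-ν)) := by
    intro z
    split_ifs with h
    · exact hK1 z h
    · rw [show -ν = (1 - (d : ℝ)) / 2 by rw [hν]; ring]
      exact hK2 z (not_lt.mp h)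
  have hmain : ∀ z, ‖K z * v (x - z) ^ 3‖ ≤
      (C * c0 * M ^ 3 * ((1 + ‖x‖ ^ 2) ^ ((1 : ℝ) / 2)) ^ (-ν)) * H z := by
    intro z
    have hWxpos := jw_pos x
    have hWzpos := jw_pos z
    have hWxzpos := jw_pos (x - z)
    have hv3 : |v (x - z) ^ 3| ≤ M ^ 3 * ((1 + ‖x - z‖ ^ 2) ^ ((1 : ℝ) / 2)) ^ (-(3 * ν)) := by
      rw [abs_pow]
      calc |v (x - z)| ^ 3
          ≤ (M * ((1 + ‖x - z‖ ^ 2) ^ ((1 : ℝ) / 2)) ^ (-ν)) ^ 3 :=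
            pow_le_pow_left₀ (abs_nonneg _) (hvbd (x - z)) 3
        _ = M ^ 3 * (((1 + ‖x - z‖ ^ 2) ^ ((1 : ℝ) / 2)) ^ (-ν)) ^ (3 : ℕ) := by ring
        _ = M ^ 3 * ((1 + ‖x - z‖ ^ 2) ^ ((1 : ℝ) / 2)) ^ (-(3 * ν)) := by
            rw [← Real.rpow_natCast (((1 + ‖x - z‖ ^ 2) ^ ((1 : ℝ) / 2)) ^ (-ν)) 3,
              ← Real.rpow_mul hWxzpos.le,
              show -ν * ((3 : ℕ) : ℝ) = -(3 * ν) by push_cast; ring]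
    have htri : (1 + ‖x‖ ^ 2) ^ ((1 : ℝ) / 2) ≤ 1 + ‖z‖ + ‖x - z‖ := by
      have h2 : ‖x‖ ≤ ‖z‖ + ‖x - z‖ := by
        calc ‖x‖ = ‖z + (x - z)‖ := by rw [add_sub_cancel]
          _ ≤ ‖z‖ + ‖x - z‖ := norm_add_le _ _
      linarith [jw_le x]
    have key : (if ‖z‖ < 1 then ‖z‖ ^ ((2 : ℝ) - d) else ‖z‖ ^ (-ν)) *
        ((1 + ‖x - z‖ ^ 2) ^ ((1 : ℝ) / 2)) ^ (-(3 * ν)) ≤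
        c0 * ((1 + ‖x‖ ^ 2) ^ ((1 : ℝ) / 2)) ^ (-ν) * H z := by
      have hHzdef : H z = ind z + (((1 + ‖z‖ ^ 2) ^ ((1 : ℝ) / 2)) ^ (-(3 * ν)) +
          ((1 + ‖x - z‖ ^ 2) ^ ((1 : ℝ) / 2)) ^ (-(3 * ν))) := rfl
      have hHz1 : ind z ≤ H z := by
        rw [hHzdef]
        have := Real.rpow_nonneg hWzpos.le (-(3 * ν))
        have := Real.rpow_nonneg hWxzpos.le (-(3 * ν))
        linarith
      have hHz2 : ((1 + ‖x - z‖ ^ 2) ^ ((1 : ℝ) / 2)) ^ (-(3 * ν)) ≤ H z := by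
        rw [hHzdef]
        have := Real.rpow_nonneg hWzpos.le (-(3 * ν))
        have := hindnn z
        linarith
      have hHz3 : ((1 + ‖z‖ ^ 2) ^ ((1 : ℝ) / 2)) ^ (-(3 * ν)) ≤ H z := by
        rw [hHzdef]
        have := Real.rpow_nonneg hWxzpos.le (-(3 * ν))
        have := hindnn z
        linarith
      have hWxnn : 0 ≤ ((1 + ‖x‖ ^ 2) ^ ((1 : ℝ) / 2)) ^ (-ν) :=
        Real.rpow_nonneg hWxpos.le _
      by_cases h1 : ‖z‖ < 1
      · rw [if_pos h1]
        have hWx3 : (1 + ‖x‖ ^ 2) ^ ((1 : ℝ) / 2) ≤ 3 * ((1 + ‖x - z‖ ^ 2) ^ ((1 : ℝ) / 2)) := by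
          have h5 := norm_le_jw (x - z)
          have h6 := one_le_jw (x - z)
          linarith
        have hb : ((1 + ‖x - z‖ ^ 2) ^ ((1 : ℝ) / 2)) ^ (-(3 * ν)) ≤
            3 ^ (3 * ν) * ((1 + ‖x‖ ^ 2) ^ ((1 : ℝ) / 2)) ^ (-(3 * ν)) :=
          rpow_neg_le_of_le hWxpos hWxzpos (by norm_num) hWx3 (by positivity)
        have hb2 : ((1 + ‖x‖ ^ 2) ^ ((1 : ℝ) / 2)) ^ (-(3 * ν)) ≤
            ((1 + ‖x‖ ^ 2) ^ ((1 : ℝ) / 2)) ^ (-ν) :=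
          Real.rpow_le_rpow_of_exponent_le (one_le_jw x) (by linarith)
        have hrnn : 0 ≤ ‖z‖ ^ ((2 : ℝ) - d) := Real.rpow_nonneg (norm_nonneg z) _
        have hindz : ind z = ‖z‖ ^ ((2 : ℝ) - d) :=
          Set.indicator_of_mem (mem_ball_zero_iff.mpr h1) _
        calc ‖z‖ ^ ((2 : ℝ) - d) * ((1 + ‖x - z‖ ^ 2) ^ ((1 : ℝ) / 2)) ^ (-(3 * ν))
            ≤ ‖z‖ ^ ((2 : ℝ) - d) * (3 ^ (3 * ν) * ((1 + ‖x‖ ^ 2) ^ ((1 : ℝ) / 2)) ^ (-ν)) := by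
              refine mul_le_mul_of_nonneg_left ?_ hrnn
              calc ((1 + ‖x - z‖ ^ 2) ^ ((1 : ℝ) / 2)) ^ (-(3 * ν))
                  ≤ 3 ^ (3 * ν) * ((1 + ‖x‖ ^ 2) ^ ((1 : ℝ) / 2)) ^ (-(3 * ν)) := hb
                _ ≤ 3 ^ (3 * ν) * ((1 + ‖x‖ ^ 2) ^ ((1 : ℝ) / 2)) ^ (-ν) :=
                    mul_le_mul_of_nonneg_left hb2 (by positivity)
          _ = 3 ^ (3 * ν) * ((1 + ‖x‖ ^ 2) ^ ((1 : ℝ) / 2)) ^ (-ν) * ind z := by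
              rw [hindz]; ring
          _ ≤ c0 * ((1 + ‖x‖ ^ 2) ^ ((1 : ℝ) / 2)) ^ (-ν) * H z := by
              have h7 : 3 ^ (3 * ν) * ((1 + ‖x‖ ^ 2) ^ ((1 : ℝ) / 2)) ^ (-ν) * ind z ≤
                  3 ^ (3 * ν) * ((1 + ‖x‖ ^ 2) ^ ((1 : ℝ) / 2)) ^ (-ν) * H z :=
                mul_le_mul_of_nonneg_left hHz1 (by positivity)
              have h8 : 3 ^ (3 * ν) * ((1 + ‖x‖ ^ 2) ^ ((1 : ℝ) / 2)) ^ (-ν) * H z ≤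
                  c0 * ((1 + ‖x‖ ^ 2) ^ ((1 : ℝ) / 2)) ^ (-ν) * H z := by
                refine mul_le_mul_of_nonneg_right (mul_le_mul_of_nonneg_right ?_ hWxnn) ?_
                · have hpos23 : (0:ℝ) ≤ 2 ^ ν * 3 ^ ν := by positivity
                  rw [hc0]; linarith
                · exact le_trans (hindnn z) hHz1
              linarith
      · rw [if_neg h1]
        have hz1 : (1 : ℝ) ≤ ‖z‖ := not_lt.mp h1
        have hzpos : (0 : ℝ) < ‖z‖ := by linarith
        have hnz : (1 + ‖z‖ ^ 2) ^ ((1 : ℝ) / 2) ≤ 2 * ‖z‖ := by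
          have := jw_le z; linarith
        have hBz : ‖z‖ ^ (-ν) ≤ 2 ^ ν * ((1 + ‖z‖ ^ 2) ^ ((1 : ℝ) / 2)) ^ (-ν) :=
          rpow_neg_le_of_le hWzpos hzpos (by norm_num) hnz hν0.le
        have hxzk : 0 ≤ ((1 + ‖x - z‖ ^ 2) ^ ((1 : ℝ) / 2)) ^ (-(3 * ν)) :=
          Real.rpow_nonneg hWxzpos.le _
        have hzk : 0 ≤ ((1 + ‖z‖ ^ 2) ^ ((1 : ℝ) / 2)) ^ (-ν) :=
          Real.rpow_nonneg hWzpos.le _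
        have step1 : ‖z‖ ^ (-ν) * ((1 + ‖x - z‖ ^ 2) ^ ((1 : ℝ) / 2)) ^ (-(3 * ν)) ≤
            2 ^ ν * (((1 + ‖z‖ ^ 2) ^ ((1 : ℝ) / 2)) ^ (-ν) *
              ((1 + ‖x - z‖ ^ 2) ^ ((1 : ℝ) / 2)) ^ (-(3 * ν))) := by
          calc ‖z‖ ^ (-ν) * ((1 + ‖x - z‖ ^ 2) ^ ((1 : ℝ) / 2)) ^ (-(3 * ν))
              ≤ (2 ^ ν * ((1 + ‖z‖ ^ 2) ^ ((1 : ℝ) / 2)) ^ (-ν)) *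
                ((1 + ‖x - z‖ ^ 2) ^ ((1 : ℝ) / 2)) ^ (-(3 * ν)) :=
                mul_le_mul_of_nonneg_right hBz hxzk
            _ = 2 ^ ν * (((1 + ‖z‖ ^ 2) ^ ((1 : ℝ) / 2)) ^ (-ν) *
                ((1 + ‖x - z‖ ^ 2) ^ ((1 : ℝ) / 2)) ^ (-(3 * ν))) := by ring
        have step2 : ((1 + ‖z‖ ^ 2) ^ ((1 : ℝ) / 2)) ^ (-ν) *
            ((1 + ‖x - z‖ ^ 2) ^ ((1 : ℝ) / 2)) ^ (-(3 * ν)) ≤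
            3 ^ ν * (((1 + ‖x‖ ^ 2) ^ ((1 : ℝ) / 2)) ^ (-ν) * H z) := by
          by_cases h2 : (1 + ‖x - z‖ ^ 2) ^ ((1 : ℝ) / 2) ≤ (1 + ‖z‖ ^ 2) ^ ((1 : ℝ) / 2)
          · -- far region : Wz is big
            have hWx3 : (1 + ‖x‖ ^ 2) ^ ((1 : ℝ) / 2) ≤ 3 * ((1 + ‖z‖ ^ 2) ^ ((1 : ℝ) / 2)) := by
              have h5 := norm_le_jw z
              have h6 := one_le_jw z
              have h7 := norm_le_jw (x - z)
              linarith
            have hz3 : ((1 + ‖z‖ ^ 2) ^ ((1 : ℝ) / 2)) ^ (-ν) ≤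
                3 ^ ν * ((1 + ‖x‖ ^ 2) ^ ((1 : ℝ) / 2)) ^ (-ν) :=
              rpow_neg_le_of_le hWxpos hWzpos (by norm_num) hWx3 hν0.le
            calc ((1 + ‖z‖ ^ 2) ^ ((1 : ℝ) / 2)) ^ (-ν) *
                ((1 + ‖x - z‖ ^ 2) ^ ((1 : ℝ) / 2)) ^ (-(3 * ν))
                ≤ (3 ^ ν * ((1 + ‖x‖ ^ 2) ^ ((1 : ℝ) / 2)) ^ (-ν)) *
                  ((1 + ‖x - z‖ ^ 2) ^ ((1 : ℝ) / 2)) ^ (-(3 * ν)) :=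
                  mul_le_mul_of_nonneg_right hz3 hxzk
              _ = 3 ^ ν * (((1 + ‖x‖ ^ 2) ^ ((1 : ℝ) / 2)) ^ (-ν) *
                  ((1 + ‖x - z‖ ^ 2) ^ ((1 : ℝ) / 2)) ^ (-(3 * ν))) := by ring
              _ ≤ 3 ^ ν * (((1 + ‖x‖ ^ 2) ^ ((1 : ℝ) / 2)) ^ (-ν) * H z) := by
                  refine mul_le_mul_of_nonneg_left (mul_le_mul_of_nonneg_left hHz2 hWxnn) ?_
                  positivity
          · -- near region : Wxz is big
            push_neg at h2
            have hWx3 : (1 + ‖x‖ ^ 2) ^ ((1 : ℝ) / 2) ≤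
                3 * ((1 + ‖x - z‖ ^ 2) ^ ((1 : ℝ) / 2)) := by
              have h5 := norm_le_jw z
              have h6 := one_le_jw (x - z)
              have h7 := norm_le_jw (x - z)
              linarith
            have hx3 : ((1 + ‖x - z‖ ^ 2) ^ ((1 : ℝ) / 2)) ^ (-ν) ≤
                3 ^ ν * ((1 + ‖x‖ ^ 2) ^ ((1 : ℝ) / 2)) ^ (-ν) :=
              rpow_neg_le_of_le hWxpos hWxzpos (by norm_num) hWx3 hν0.le
            have hsplit : ((1 + ‖x - z‖ ^ 2) ^ ((1 : ℝ) / 2)) ^ (-(3 * ν)) =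
                ((1 + ‖x - z‖ ^ 2) ^ ((1 : ℝ) / 2)) ^ (-ν) *
                ((1 + ‖x - z‖ ^ 2) ^ ((1 : ℝ) / 2)) ^ (-(2 * ν)) := by
              rw [← Real.rpow_add hWxzpos]; ring_nf
            have hmono : ((1 + ‖x - z‖ ^ 2) ^ ((1 : ℝ) / 2)) ^ (-(2 * ν)) ≤
                ((1 + ‖z‖ ^ 2) ^ ((1 : ℝ) / 2)) ^ (-(2 * ν)) :=
              Real.rpow_le_rpow_of_nonpos hWzpos h2.le (by linarith)
            have hcollapse : ((1 + ‖z‖ ^ 2) ^ ((1 : ℝ) / 2)) ^ (-ν) *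
                ((1 + ‖z‖ ^ 2) ^ ((1 : ℝ) / 2)) ^ (-(2 * ν)) =
                ((1 + ‖z‖ ^ 2) ^ ((1 : ℝ) / 2)) ^ (-(3 * ν)) := by
              rw [← Real.rpow_add hWzpos]; ring_nf
            have hxz2nn : 0 ≤ ((1 + ‖x - z‖ ^ 2) ^ ((1 : ℝ) / 2)) ^ (-(2 * ν)) :=
              Real.rpow_nonneg hWxzpos.le _
            calc ((1 + ‖z‖ ^ 2) ^ ((1 : ℝ) / 2)) ^ (-ν) *
                ((1 + ‖x - z‖ ^ 2) ^ ((1 : ℝ) / 2)) ^ (-(3 * ν))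
                = ((1 + ‖x - z‖ ^ 2) ^ ((1 : ℝ) / 2)) ^ (-ν) *
                  (((1 + ‖z‖ ^ 2) ^ ((1 : ℝ) / 2)) ^ (-ν) *
                    ((1 + ‖x - z‖ ^ 2) ^ ((1 : ℝ) / 2)) ^ (-(2 * ν))) := by
                  rw [hsplit]; ring
              _ ≤ (3 ^ ν * ((1 + ‖x‖ ^ 2) ^ ((1 : ℝ) / 2)) ^ (-ν)) *
                  (((1 + ‖z‖ ^ 2) ^ ((1 : ℝ) / 2)) ^ (-ν) *
                    ((1 + ‖z‖ ^ 2) ^ ((1 : ℝ) / 2)) ^ (-(2 * ν))) := by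
                  refine mul_le_mul hx3 (mul_le_mul_of_nonneg_left hmono hzk) ?_ ?_
                  · positivity
                  · positivity
              _ = 3 ^ ν * (((1 + ‖x‖ ^ 2) ^ ((1 : ℝ) / 2)) ^ (-ν) *
                  ((1 + ‖z‖ ^ 2) ^ ((1 : ℝ) / 2)) ^ (-(3 * ν))) := by
                  rw [hcollapse]; ring
              _ ≤ 3 ^ ν * (((1 + ‖x‖ ^ 2) ^ ((1 : ℝ) / 2)) ^ (-ν) * H z) := by
                  refine mul_le_mul_of_nonneg_left (mul_le_mul_of_nonneg_left hHz3 hWxnn) ?_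
                  positivity
        calc ‖z‖ ^ (-ν) * ((1 + ‖x - z‖ ^ 2) ^ ((1 : ℝ) / 2)) ^ (-(3 * ν))
            ≤ 2 ^ ν * (((1 + ‖z‖ ^ 2) ^ ((1 : ℝ) / 2)) ^ (-ν) *
              ((1 + ‖x - z‖ ^ 2) ^ ((1 : ℝ) / 2)) ^ (-(3 * ν))) := step1
          _ ≤ 2 ^ ν * (3 ^ ν * (((1 + ‖x‖ ^ 2) ^ ((1 : ℝ) / 2)) ^ (-ν) * H z)) :=
              mul_le_mul_of_nonneg_left step2 (by positivity)
          _ = (2 ^ ν * 3 ^ ν) * ((1 + ‖x‖ ^ 2) ^ ((1 : ℝ) / 2)) ^ (-ν) * H z := by ring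
          _ ≤ c0 * ((1 + ‖x‖ ^ 2) ^ ((1 : ℝ) / 2)) ^ (-ν) * H z := by
              have h9 : (0:ℝ) ≤ ((1 + ‖x‖ ^ 2) ^ ((1 : ℝ) / 2)) ^ (-ν) * H z :=
                mul_nonneg hWxnn (le_trans (hindnn z) hHz1)
              have h10 : (2:ℝ) ^ ν * 3 ^ ν ≤ c0 := by
                have hpos33 : (0:ℝ) ≤ 3 ^ (3 * ν) := by positivity
                rw [hc0]; linarith
              calc (2 ^ ν * 3 ^ ν) * ((1 + ‖x‖ ^ 2) ^ ((1 : ℝ) / 2)) ^ (-ν) * H z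
                  = (2 ^ ν * 3 ^ ν) * (((1 + ‖x‖ ^ 2) ^ ((1 : ℝ) / 2)) ^ (-ν) * H z) := by ring
                _ ≤ c0 * (((1 + ‖x‖ ^ 2) ^ ((1 : ℝ) / 2)) ^ (-ν) * H z) :=
                    mul_le_mul_of_nonneg_right h10 h9
                _ = c0 * ((1 + ‖x‖ ^ 2) ^ ((1 : ℝ) / 2)) ^ (-ν) * H z := by ring
    have hBz0 : 0 ≤ (if ‖z‖ < 1 then ‖z‖ ^ ((2 : ℝ) - d) else ‖z‖ ^ (-ν)) := by
      split_ifs <;> exact Real.rpow_nonneg (norm_nonneg z) _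
    calc ‖K z * v (x - z) ^ 3‖ = |K z| * |v (x - z) ^ 3| := by
          rw [Real.norm_eq_abs, abs_mul]
      _ ≤ (C * (if ‖z‖ < 1 then ‖z‖ ^ ((2 : ℝ) - d) else ‖z‖ ^ (-ν))) *
          (M ^ 3 * ((1 + ‖x - z‖ ^ 2) ^ ((1 : ℝ) / 2)) ^ (-(3 * ν))) :=
          mul_le_mul (hKB z) hv3 (abs_nonneg _) (by positivity)
      _ = (C * M ^ 3) * ((if ‖z‖ < 1 then ‖z‖ ^ ((2 : ℝ) - d) else ‖z‖ ^ (-ν)) *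
          ((1 + ‖x - z‖ ^ 2) ^ ((1 : ℝ) / 2)) ^ (-(3 * ν))) := by ring
      _ ≤ (C * M ^ 3) * (c0 * ((1 + ‖x‖ ^ 2) ^ ((1 : ℝ) / 2)) ^ (-ν) * H z) :=
          mul_le_mul_of_nonneg_left key (by positivity)
      _ = (C * c0 * M ^ 3 * ((1 + ‖x‖ ^ 2) ^ ((1 : ℝ) / 2)) ^ (-ν)) * H z := by ring
  have hnorm := norm_integral_le_of_norm_le
    (hIntH.const_mul (C * c0 * M ^ 3 * ((1 + ‖x‖ ^ 2) ^ ((1 : ℝ) / 2)) ^ (-ν)))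
    (Filter.Eventually.of_forall hmain)
  rw [integral_const_mul, hintH] at hnorm
  have habs : |∫ z, K z * v (x - z) ^ 3| ≤
      C * c0 * M ^ 3 * ((1 + ‖x‖ ^ 2) ^ ((1 : ℝ) / 2)) ^ (-ν) * (c1 + 2 * c3) := by
    rw [← Real.norm_eq_abs]; exact hnorm
  have hWxnn' : (0:ℝ) ≤ ((1 + ‖x‖ ^ 2) ^ ((1 : ℝ) / 2)) ^ ν := Real.rpow_nonneg (jw_pos x).le _
  calc ((1 + ‖x‖ ^ 2) ^ ((1 : ℝ) / 2)) ^ ν * |∫ z, K z * v (x - z) ^ 3|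
      ≤ ((1 + ‖x‖ ^ 2) ^ ((1 : ℝ) / 2)) ^ ν *
        (C * c0 * M ^ 3 * ((1 + ‖x‖ ^ 2) ^ ((1 : ℝ) / 2)) ^ (-ν) * (c1 + 2 * c3)) :=
        mul_le_mul_of_nonneg_left habs hWxnn'
    _ = (C * c0 * (c1 + 2 * c3)) * M ^ 3 *
        (((1 + ‖x‖ ^ 2) ^ ((1 : ℝ) / 2)) ^ ν * ((1 + ‖x‖ ^ 2) ^ ((1 : ℝ) / 2)) ^ (-ν)) := by
        ring
    _ = (C * c0 * (c1 + 2 * c3)) * M ^ 3 := by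
        rw [← Real.rpow_add (jw_pos x), add_neg_cancel, Real.rpow_zero, mul_one]
    _ ≤ (C * c0 * (c1 + 2 * c3) + 1) * M ^ 3 := by
        nlinarith [pow_nonneg hM0 3]
end
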